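/- Let X be a finite nonempty set and let C be a choice function on X, i.e. a map assigning to every nonempty subset A ⊆ X a nonempty subset C(A) ⊆ A. Then C is pseudo-rationalisable — meaning there exist finitely many functions u₁,…,u_d : X → ℝ such that for every nonempty A ⊆ X, C(A) = ⋃_{k=1}^d argmax_{o ∈ A} u_k(o) — if and only if C satisfies the Chernoff and Aizerman properties. -/

import Mathlib

section MoulinAux

variable {X : Type*} [Fintype X] [DecidableEq X]

/-- Greedy enumeration of `T` used to build utility functions. -/
noncomputable def moulinEnum (C : Finset X → Finset X) (A : Finset X) (o : X)
    (T : Finset X) : List X :=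
  if hT : T.Nonempty then
    if h1 : ((C T ∩ T) \ A).Nonempty then
      h1.choose :: moulinEnum C A o (T.erase h1.choose)
    else if h2 : o ∈ T then
      o :: moulinEnum C A o (T.erase o)
    else if h3 : (C T ∩ T).Nonempty then
      h3.choose :: moulinEnum C A o (T.erase h3.choose)
    else []
  else []
termination_by T.card
decreasing_by
  · exact Finset.card_erase_lt_of_mem
      (Finset.mem_of_mem_inter_right (Finset.mem_sdiff.1 h1.choose_spec).1)
  · exact Finset.card_erase_lt_of_mem h2
  · exact Finset.card_erase_lt_of_mem (Finset.mem_of_mem_inter_right h3.choose_spec)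

variable {C : Finset X → Finset X} {A : Finset X} {o : X}

/-- Every element of `T` appears in the enumeration. -/
lemma moulinEnum_mem (hsub : ∀ B, C B ⊆ B) (hne : ∀ B : Finset X, B.Nonempty → (C B).Nonempty) :
    ∀ n (T : Finset X), T.card ≤ n → ∀ x ∈ T, x ∈ moulinEnum C A o T := by
  intro n
  induction n with
  | zero =>
    intro T hT x hx
    have : T = ∅ := Finset.card_eq_zero.1 (Nat.le_zero.1 hT)
    simp [this] at hx
  | succ n ih =>
    intro T hT x hx
    have hTne : T.Nonempty := ⟨x, hx⟩
    have hcard : ∀ y ∈ T, (T.erase y).card ≤ n := by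
      intro y hy
      have := Finset.card_erase_of_mem hy
      omega
    rw [moulinEnum, dif_pos hTne]
    by_cases h1 : ((C T ∩ T) \ A).Nonempty
    · rw [dif_pos h1]
      by_cases hxe : x = h1.choose
      · exact hxe ▸ List.mem_cons_self
      · exact List.mem_cons_of_mem _
          (ih _ (hcard _ (Finset.mem_of_mem_inter_right (Finset.mem_sdiff.1 h1.choose_spec).1))
            x (Finset.mem_erase.2 ⟨hxe, hx⟩))
    · rw [dif_neg h1]
      by_cases h2 : o ∈ T
      · rw [dif_pos h2]
        by_cases hxe : x = o
        · exact hxe ▸ List.mem_cons_self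
        · exact List.mem_cons_of_mem _
            (ih _ (hcard _ h2) x (Finset.mem_erase.2 ⟨hxe, hx⟩))
      · rw [dif_neg h2]
        have h3 : (C T ∩ T).Nonempty := by
          obtain ⟨y, hy⟩ := hne T hTne
          exact ⟨y, Finset.mem_inter.2 ⟨hy, hsub T hy⟩⟩
        rw [dif_pos h3]
        by_cases hxe : x = h3.choose
        · exact hxe ▸ List.mem_cons_self
        · exact List.mem_cons_of_mem _
            (ih _ (hcard _ (Finset.mem_of_mem_inter_right h3.choose_spec))
              x (Finset.mem_erase.2 ⟨hxe, hx⟩))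

/-- Key property: an element of `A'` with minimal index in the enumeration of `T ⊇ A'`
is chosen from `A'`. -/
lemma moulinEnum_min (hsub : ∀ B, C B ⊆ B)
    (hne : ∀ B : Finset X, B.Nonempty → (C B).Nonempty)
    (hc : ∀ B B' : Finset X, B' ⊆ B → C B ∩ B' ⊆ C B')
    (ha : ∀ B B' : Finset X, C B ⊆ B' → B' ⊆ B → C B' ⊆ C B)
    (hA : o ∈ C A) :
    ∀ n (T : Finset X), T.card ≤ n → (o ∈ T → A ⊆ T) →
      ∀ A' : Finset X, A' ⊆ T → ∀ m ∈ A',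
        (∀ v ∈ A', (moulinEnum C A o T).idxOf m ≤ (moulinEnum C A o T).idxOf v) →
        m ∈ C A' := by
  intro n
  induction n with
  | zero =>
    intro T hT _ A' hA' m hm _
    have : T = ∅ := Finset.card_eq_zero.1 (Nat.le_zero.1 hT)
    subst this
    exact absurd (hA' hm) (by simp)
  | succ n ih =>
    intro T hT hinv A' hA' m hm hmin
    have hTne : T.Nonempty := ⟨m, hA' hm⟩
    have hcard : ∀ y ∈ T, (T.erase y).card ≤ n := by
      intro y hy
      have := Finset.card_erase_of_mem hy
      omega
    have shrink : ∀ (x : X), x ∉ A' →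
        (∀ v ∈ A', ((x :: moulinEnum C A o (T.erase x)).idxOf m ≤
          (x :: moulinEnum C A o (T.erase x)).idxOf v)) →
        ∀ v ∈ A', (moulinEnum C A o (T.erase x)).idxOf m ≤
          (moulinEnum C A o (T.erase x)).idxOf v := by
      intro x hxA' hmin' v hv
      have hmx : x ≠ m := by rintro rfl; exact hxA' hm
      have hvx : x ≠ v := by rintro rfl; exact hxA' hv
      have h1 := List.idxOf_cons_ne (moulinEnum C A o (T.erase x)) hmx
      have h2 := List.idxOf_cons_ne (moulinEnum C A o (T.erase x)) hvx
      have := hmin' v hv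
      omega
    rw [moulinEnum, dif_pos hTne] at hmin
    by_cases h1 : ((C T ∩ T) \ A).Nonempty
    · rw [dif_pos h1] at hmin
      set x := h1.choose with hx
      obtain ⟨hxCT, hxA⟩ := Finset.mem_sdiff.1 h1.choose_spec
      have hxC : x ∈ C T := Finset.mem_of_mem_inter_left hxCT
      have hxT : x ∈ T := Finset.mem_of_mem_inter_right hxCT
      by_cases hmx : m = x
      · exact hc T A' hA' (Finset.mem_inter.2 ⟨hmx ▸ hxC, hm⟩)
      · have hxA' : x ∉ A' := by
          intro hxA'
          have h0 : (x :: moulinEnum C A o (T.erase x)).idxOf x = 0 := by simp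
          have hms := List.idxOf_cons_ne (moulinEnum C A o (T.erase x)) (Ne.symm hmx)
          have := hmin x hxA'
          omega
        refine ih _ (hcard x hxT) ?_ A'
          (fun v hv => Finset.mem_erase.2 ⟨by rintro rfl; exact hxA' hv, hA' hv⟩)
          m hm (shrink x hxA' hmin)
        intro ho
        exact fun a hb => Finset.mem_erase.2
          ⟨by rintro rfl; exact hxA hb, hinv (Finset.mem_of_mem_erase ho) hb⟩
    · rw [dif_neg h1] at hmin
      by_cases h2 : o ∈ T
      · rw [dif_pos h2] at hmin
        have hCTA : C T ⊆ A := by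
          intro y hy
          by_contra hyA
          exact h1 ⟨y, Finset.mem_sdiff.2 ⟨Finset.mem_inter.2 ⟨hy, hsub T hy⟩, hyA⟩⟩
        have hoCT : o ∈ C T := ha T A hCTA (hinv h2) hA
        by_cases hmo : m = o
        · exact hc T A' hA' (Finset.mem_inter.2 ⟨hmo ▸ hoCT, hm⟩)
        · have hoA' : o ∉ A' := by
            intro hoA'
            have hms := List.idxOf_cons_ne (moulinEnum C A o (T.erase o)) (Ne.symm hmo)
            have h0 : (o :: moulinEnum C A o (T.erase o)).idxOf o = 0 := by simp
            have := hmin o hoA'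
            omega
          refine ih _ (hcard o h2) ?_ A'
            (fun v hv => Finset.mem_erase.2 ⟨by rintro rfl; exact hoA' hv, hA' hv⟩)
            m hm (shrink o hoA' hmin)
          intro ho; exact absurd (Finset.mem_erase.1 ho).1 (by simp)
      · rw [dif_neg h2] at hmin
        by_cases h3 : (C T ∩ T).Nonempty
        · rw [dif_pos h3] at hmin
          set x := h3.choose with hx
          have hxC : x ∈ C T := Finset.mem_of_mem_inter_left h3.choose_spec
          have hxT : x ∈ T := Finset.mem_of_mem_inter_right h3.choose_spec
          by_cases hmx : m = x
          · exact hc T A' hA' (Finset.mem_inter.2 ⟨hmx ▸ hxC, hm⟩)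
          · have hxA' : x ∉ A' := by
              intro hxA'
              have hms := List.idxOf_cons_ne (moulinEnum C A o (T.erase x)) (Ne.symm hmx)
              have h0 : (x :: moulinEnum C A o (T.erase x)).idxOf x = 0 := by simp
              have := hmin x hxA'
              omega
            refine ih _ (hcard x hxT) ?_ A'
              (fun v hv => Finset.mem_erase.2 ⟨by rintro rfl; exact hxA' hv, hA' hv⟩)
              m hm (shrink x hxA' hmin)
            intro ho; exact absurd (Finset.mem_of_mem_erase ho) h2
        · obtain ⟨y, hy⟩ := hne T hTne
          exact absurd ⟨y, Finset.mem_inter.2 ⟨hy, hsub T hy⟩⟩ h3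


/-- If `o ∈ T` and `A ⊆ T`, then `o` is the first element of `A` in the enumeration. -/
lemma moulinEnum_first (hsub : ∀ B, C B ⊆ B) (hA : o ∈ C A) :
    ∀ n (T : Finset X), T.card ≤ n → o ∈ T → A ⊆ T →
      ∀ v ∈ A, (moulinEnum C A o T).idxOf o ≤ (moulinEnum C A o T).idxOf v := by
  intro n
  induction n with
  | zero =>
    intro T hT ho _ v _
    have : T = ∅ := Finset.card_eq_zero.1 (Nat.le_zero.1 hT)
    subst this
    exact absurd ho (by simp)
  | succ n ih =>
    intro T hT ho hAT v hv
    have hTne : T.Nonempty := ⟨o, ho⟩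
    have hoA : o ∈ A := hsub A hA
    rw [moulinEnum, dif_pos hTne]
    by_cases h1 : ((C T ∩ T) \ A).Nonempty
    · rw [dif_pos h1]
      set x := h1.choose with hx
      obtain ⟨hxCT, hxA⟩ := Finset.mem_sdiff.1 h1.choose_spec
      have hxT : x ∈ T := Finset.mem_of_mem_inter_right hxCT
      have hxo : x ≠ o := by rintro rfl; exact hxA hoA
      have hxv : x ≠ v := by rintro rfl; exact hxA hv
      have hcard : (T.erase x).card ≤ n := by
        have := Finset.card_erase_of_mem hxT
        omega
      have h1' := List.idxOf_cons_ne (moulinEnum C A o (T.erase x)) hxo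
      have h2' := List.idxOf_cons_ne (moulinEnum C A o (T.erase x)) hxv
      have := ih _ hcard (Finset.mem_erase.2 ⟨Ne.symm hxo, ho⟩)
        (fun a hb => Finset.mem_erase.2 ⟨by rintro rfl; exact hxA hb, hAT hb⟩) v hv
      omega
    · rw [dif_neg h1, dif_pos ho]
      simp

end MoulinAux

/-- Moulin's theorem: a choice function on a finite set is pseudo-rationalisable
(its value on every set is the union of the argmax sets of finitely many utility
functions) iff it satisfies Chernoff and Aizerman. -/
theorem pseudo_rationalisable_iff_chernoff_aizerman
    {X : Type*} [Fintype X] [DecidableEq X] [Nonempty X]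
    (C : Finset X → Finset X)
    (hsub : ∀ A, C A ⊆ A)
    (hne : ∀ A : Finset X, A.Nonempty → (C A).Nonempty) :
    (∃ (d : ℕ) (u : Fin d → X → ℝ),
      ∀ A : Finset X, A.Nonempty → ∀ o : X,
        (o ∈ C A ↔ ∃ k : Fin d, o ∈ A ∧ ∀ v ∈ A, u k v ≤ u k o)) ↔
    ((∀ A A' : Finset X, A' ⊆ A → C A ∩ A' ⊆ C A') ∧
     (∀ A A' : Finset X, C A ⊆ A' → A' ⊆ A → C A' ⊆ C A)) := by
  constructor
  · rintro ⟨d, u, hu⟩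
    constructor
    · intro A A' hA'A x hx
      obtain ⟨hxCA, hxA'⟩ := Finset.mem_inter.1 hx
      have hAne : A.Nonempty := ⟨x, hA'A hxA'⟩
      obtain ⟨k, hxA, hmax⟩ := (hu A hAne x).1 hxCA
      exact (hu A' ⟨x, hxA'⟩ x).2 ⟨k, hxA', fun v hv => hmax v (hA'A hv)⟩
    · intro A A' hCA hA'A x hx
      have hxA' : x ∈ A' := hsub A' hx
      have hAne : A.Nonempty := ⟨x, hA'A hxA'⟩
      obtain ⟨k, _, hmax'⟩ := (hu A' ⟨x, hxA'⟩ x).1 hx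
      obtain ⟨m, hmA, hmmax⟩ := Finset.exists_max_image A (u k) hAne
      have hmCA : m ∈ C A := (hu A hAne m).2 ⟨k, hmA, hmmax⟩
      have hmA' : m ∈ A' := hCA hmCA
      exact (hu A hAne x).2 ⟨k, hA'A hxA',
        fun v hv => le_trans (hmmax v hv) (hmax' m hmA')⟩
  · rintro ⟨hc, ha⟩
    classical
    set S := {p : Finset X × X // p.2 ∈ C p.1} with hS
    set e := (Fintype.equivFin S).symm with he
    refine ⟨Fintype.card S, fun k x =>
      -(((moulinEnum C (e k).1.1 (e k).1.2 Finset.univ).idxOf x : ℕ) : ℝ), ?_⟩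
    intro A hAne o
    have negle : ∀ a b : ℕ, (-(a : ℝ) ≤ -(b : ℝ)) ↔ b ≤ a := by
      intro a b; rw [neg_le_neg_iff, Nat.cast_le]
    constructor
    · intro hoCA
      refine ⟨(Fintype.equivFin S) ⟨(A, o), hoCA⟩, hsub A hoCA, ?_⟩
      intro v hv
      have hek : e ((Fintype.equivFin S) ⟨(A, o), hoCA⟩) = ⟨(A, o), hoCA⟩ :=
        Equiv.symm_apply_apply _ _
      simp only [hek]
      rw [negle]
      exact moulinEnum_first hsub hoCA Finset.univ.card Finset.univ le_rfl
        (Finset.mem_univ o) (Finset.subset_univ A) v hv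
    · rintro ⟨k, hoA, hmax⟩
      set B := (e k).1.1 with hB
      set w := (e k).1.2 with hw
      have hwC : w ∈ C B := (e k).2
      set l := moulinEnum C B w Finset.univ with hl
      obtain ⟨m, hmA, hmmin⟩ := Finset.exists_min_image A (fun x => l.idxOf x) hAne
      have hmC : m ∈ C A := moulinEnum_min hsub hne hc ha hwC Finset.univ.card
        Finset.univ le_rfl (fun _ => Finset.subset_univ B) A (Finset.subset_univ A)
        m hmA hmmin
      have h1 : l.idxOf o ≤ l.idxOf m := by
        have := hmax m hmA
        simp only [negle] at this
        exact this
      have h2 : l.idxOf m ≤ l.idxOf o := hmmin o hoA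
      have heq : l.idxOf o = l.idxOf m := le_antisymm h1 h2
      have hol : o ∈ l := moulinEnum_mem hsub hne Finset.univ.card Finset.univ le_rfl
        o (Finset.mem_univ o)
      have hml : m ∈ l := moulinEnum_mem hsub hne Finset.univ.card Finset.univ le_rfl
        m (Finset.mem_univ m)
      have : o = m := (List.idxOf_inj hol).1 heq
      exact this ▸ hmC
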